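/- Let X_1, …, X_n be independent integrable random vectors in ℝ^d with E[X_i] = 0, let (X′_1, …, X′_n) be an independent copy of (X_1, …, X_n) (independent of it), and let I be uniformly distributed on {1, …, n} and independent of all the X_i and X′_i. Set W = n^{−1/2} ∑_{i=1}^n X_i and δ = n^{−1/2}(X′_I − X_I). Then the conditional expectation of δ given the σ-algebra generated by W satisfies E[δ | σ(W)] = −W/n almost surely. -/

import Mathlib

open MeasureTheory ProbabilityTheory

theorem stmt15 (n d : ℕ) (hn : 1 ≤ n) (hd : 1 ≤ d)
    (Ω : Type) (mΩ : MeasurableSpace Ω) (μ : Measure Ω)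
    (hμ : IsProbabilityMeasure μ)
    (X X' : Fin n → Ω → EuclideanSpace ℝ (Fin d))
    (hXm : ∀ i, Measurable (X i)) (hX'm : ∀ i, Measurable (X' i))
    (hint : ∀ i, Integrable (X i) μ)
    (hmean : ∀ i, ∫ ω, X i ω ∂μ = 0)
    -- the 2n random vectors X_1, …, X_n, X'_1, …, X'_n are mutually independent
    (hindep : iIndepFun (Sum.elim X X') μ)
    -- (X'_1, …, X'_n) has the same (joint) law as (X_1, …, X_n)
    (hcopy : Measure.map (fun ω => fun i => X' i ω) μ
      = Measure.map (fun ω => fun i => X i ω) μ)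
    (I : Ω → Fin n) (hIm : Measurable I)
    -- I is uniform on {1, …, n}
    (hIunif : ∀ i, μ (I ⁻¹' {i}) = 1 / n)
    -- I is independent of all the X_i and X'_i
    (hIindep : IndepFun I (fun ω => (fun i => X i ω, fun i => X' i ω)) μ)
    (W δ : Ω → EuclideanSpace ℝ (Fin d))
    (hW : ∀ ω, W ω = (Real.sqrt n)⁻¹ • ∑ i, X i ω)
    (hδ : ∀ ω, δ ω = (Real.sqrt n)⁻¹ • (X' (I ω) ω - X (I ω) ω)) :
    μ[δ | MeasurableSpace.comap W inferInstance]
      =ᵐ[μ] fun ω => (-(n : ℝ)⁻¹) • W ω := by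
  classical
  set c : ℝ := (Real.sqrt n)⁻¹ with hcdef
  have hnR : (0:ℝ) < n := by exact_mod_cast hn
  have hsq : (0:ℝ) < Real.sqrt n := Real.sqrt_pos.mpr hnR
  have hcs : c * Real.sqrt n = 1 := inv_mul_cancel₀ hsq.ne'
  have hWfun : W = fun ω => c • ∑ i, X i ω := funext hW
  have hWm : Measurable W := by
    rw [hWfun]; exact (Finset.measurable_sum _ fun i _ => hXm i).const_smul c
  have hWint : Integrable W μ := by
    rw [hWfun]; exact (integrable_finset_sum _ fun i _ => hint i).smul c
  set J : Ω → (Fin n → EuclideanSpace ℝ (Fin d)) := fun ω i => X i ω with hJdef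
  set J' : Ω → (Fin n → EuclideanSpace ℝ (Fin d)) := fun ω i => X' i ω with hJ'def
  have hJm : Measurable J := measurable_pi_lambda _ hXm
  have hJ'm : Measurable J' := measurable_pi_lambda _ hX'm
  have hGsm : ∀ i : Fin n, StronglyMeasurable fun v : Fin n → EuclideanSpace ℝ (Fin d) => v i :=
    fun i => (measurable_pi_apply i).stronglyMeasurable
  have hX'int : ∀ i, Integrable (X' i) μ := by
    intro i
    have h1 : Integrable (fun v : Fin n → EuclideanSpace ℝ (Fin d) => v i) (Measure.map J μ) :=
      (integrable_map_measure (hGsm i).aestronglyMeasurable hJm.aemeasurable).mpr (hint i)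
    have h2 : Integrable (fun v : Fin n → EuclideanSpace ℝ (Fin d) => v i) (Measure.map J' μ) := by rw [hcopy]; exact h1
    exact (integrable_map_measure (hGsm i).aestronglyMeasurable hJ'm.aemeasurable).mp h2
  have hX'mean : ∀ i, ∫ ω, X' i ω ∂μ = 0 := by
    intro i
    have h1 : ∫ ω, X' i ω ∂μ = ∫ v, v i ∂(Measure.map J' μ) :=
      (integral_map hJ'm.aemeasurable (hGsm i).aestronglyMeasurable).symm
    rw [h1, hcopy, integral_map hJm.aemeasurable (hGsm i).aestronglyMeasurable]
    exact hmean i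
  -- integrability of the randomly-indexed variables
  have hind : ∀ (Y : Fin n → Ω → EuclideanSpace ℝ (Fin d)), (∀ i, Integrable (Y i) μ) →
      Integrable (fun ω => Y (I ω) ω) μ := by
    intro Y hY
    have h1 : ∀ i : Fin n, Integrable (fun ω => if I ω = i then Y i ω else 0) μ := by
      intro i
      have h2 : (fun ω => if I ω = i then Y i ω else 0) = (I ⁻¹' {i}).indicator (Y i) := by
        funext ω; simp [Set.indicator_apply]
      rw [h2]; exact (hY i).indicator (hIm (measurableSet_singleton i))
    have h3 := integrable_finset_sum (μ := μ) Finset.univ (fun i _ => h1 i)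
    refine h3.congr (ae_of_all _ fun ω => ?_)
    simp [Finset.sum_ite_eq]
  have hXIint : Integrable (fun ω => X (I ω) ω) μ := hind X hint
  have hX'Iint : Integrable (fun ω => X' (I ω) ω) μ := hind X' hX'int
  have hδint : Integrable δ μ :=
    ((hX'Iint.sub hXIint).smul c).congr (ae_of_all _ fun ω => (hδ ω).symm)
  -- componentwise integral
  have int_apply : ∀ (f : Ω → EuclideanSpace ℝ (Fin d)), Integrable f μ → ∀ j, (∫ ω, f ω ∂μ) j = ∫ ω, f ω j ∂μ := by
    intro f hf j
    have := (EuclideanSpace.proj (𝕜 := ℝ) j).integral_comp_comm hf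
    simpa using this.symm
  have hm : MeasurableSpace.comap W inferInstance ≤ mΩ := hWm.comap_le
  haveI : SigmaFinite (μ.trim hm) := by infer_instance
  refine (ae_eq_condExp_of_forall_setIntegral_eq hm hδint ?_ ?_ ?_).symm
  · intro s _ _
    exact (hWint.smul (-(n:ℝ)⁻¹)).integrableOn
  · intro s hs _
    obtain ⟨t, ht, rfl⟩ := hs
    have hsm : MeasurableSet (W ⁻¹' t) := hWm ht
    rw [← integral_indicator hsm, ← integral_indicator hsm]
    have hgind : Integrable ((W ⁻¹' t).indicator fun ω => -(n:ℝ)⁻¹ • W ω) μ :=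
      (hWint.smul (-(n:ℝ)⁻¹)).indicator hsm
    have hδind : Integrable ((W ⁻¹' t).indicator δ) μ := hδint.indicator hsm
    refine PiLp.ext fun j => ?_
    rw [int_apply _ hgind j, int_apply _ hδind j]
    set χ : Ω → ℝ := fun ω => t.indicator (fun _ => (1:ℝ)) (W ω) with hχdef
    have hχm : Measurable χ := (measurable_const.indicator ht).comp hWm
    have hχb : ∀ ω, ‖χ ω‖ ≤ 1 := by
      intro ω; by_cases h : W ω ∈ t <;> simp [hχdef, Set.indicator_apply, h]
    have hχint : Integrable χ μ := by
      have h2 : χ = (W ⁻¹' t).indicator (fun _ => (1:ℝ)) := by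
        funext ω; by_cases h : W ω ∈ t <;>
          simp [hχdef, Set.indicator_apply, h, Set.mem_preimage]
      rw [h2]; exact (integrable_const 1).indicator hsm
    have hL : ∀ ω, ((W ⁻¹' t).indicator (fun ω => -(n:ℝ)⁻¹ • W ω) ω) j
        = -(n:ℝ)⁻¹ * (χ ω * W ω j) := by
      intro ω; by_cases h : W ω ∈ t <;>
        simp [hχdef, Set.indicator_apply, h, Set.mem_preimage] <;> ring
    have hR : ∀ ω, ((W ⁻¹' t).indicator δ ω) j
        = χ ω * (c * (X' (I ω) ω j - X (I ω) ω j)) := by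
      intro ω; by_cases h : W ω ∈ t <;>
        simp [hχdef, Set.indicator_apply, h, Set.mem_preimage, hδ ω] <;> ring
    simp only [hL, hR]
    -- component integrability
    have hXj : ∀ i, Integrable (fun ω => X i ω j) μ := by
      intro i; have := (EuclideanSpace.proj (𝕜 := ℝ) j).integrable_comp (hint i)
      simpa using this
    have hX'j : ∀ i, Integrable (fun ω => X' i ω j) μ := by
      intro i; have := (EuclideanSpace.proj (𝕜 := ℝ) j).integrable_comp (hX'int i)
      simpa using this
    have hXIj : Integrable (fun ω => X (I ω) ω j) μ := by
      have := (EuclideanSpace.proj (𝕜 := ℝ) j).integrable_comp hXIint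
      simpa using this
    have hX'Ij : Integrable (fun ω => X' (I ω) ω j) μ := by
      have := (EuclideanSpace.proj (𝕜 := ℝ) j).integrable_comp hX'Iint
      simpa using this
    have hX'jmean : ∀ i, ∫ ω, X' i ω j ∂μ = 0 := by
      intro i; rw [← int_apply _ (hX'int i) j, hX'mean i]; rfl
    have hbdd : ∀ (g f : Ω → ℝ), Measurable g → (∀ ω, ‖g ω‖ ≤ 1) → Integrable f μ →
        Integrable (fun ω => g ω * f ω) μ := by
      intro g f hg hgb hf
      exact hf.bdd_mul hg.aestronglyMeasurable (ae_of_all _ hgb)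
    -- the selector functions
    set g : Fin n → Ω → ℝ := fun i ω => if I ω = i then (1:ℝ) else 0 with hgdef
    have hgeq : ∀ i, g i = (I ⁻¹' {i}).indicator (fun _ => (1:ℝ)) := by
      intro i; funext ω; simp [hgdef, Set.indicator_apply]
    have hgm : ∀ i, Measurable (g i) := by
      intro i; rw [hgeq i]
      exact measurable_const.indicator (hIm (measurableSet_singleton i))
    have hgb : ∀ i ω, ‖g i ω‖ ≤ 1 := by
      intro i ω; by_cases h : I ω = i <;> simp [hgdef, h]
    have hgiint : ∀ i, Integrable (g i) μ := by
      intro i; rw [hgeq i]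
      exact (integrable_const 1).indicator (hIm (measurableSet_singleton i))
    have hgint_val : ∀ i, ∫ ω, g i ω ∂μ = (n:ℝ)⁻¹ := by
      intro i
      have h1 : ∫ ω, g i ω ∂μ = ∫ ω, (I ⁻¹' {i}).indicator (fun _ => (1:ℝ)) ω ∂μ := by
        rw [hgeq i]
      rw [h1, integral_indicator_const _ (hIm (measurableSet_singleton i)), measureReal_def, hIunif i]
      simp [ENNReal.toReal_inv]
    -- the key independence computation with the uniform index
    have hA : ∀ (i : Fin n) (Y : Ω → ℝ),
        (∃ ψ : (Fin n → EuclideanSpace ℝ (Fin d)) × (Fin n → EuclideanSpace ℝ (Fin d)) → ℝ, Measurable ψ ∧ ∀ ω, Y ω = ψ (J ω, J' ω)) →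
        Integrable Y μ → ∫ ω, g i ω * Y ω ∂μ = (n:ℝ)⁻¹ * ∫ ω, Y ω ∂μ := by
      rintro i Y ⟨ψ, hψm, hψeq⟩ hYint
      have hφm : Measurable (fun k : Fin n => if k = i then (1:ℝ) else 0) :=
        Measurable.of_discrete
      have hi : IndepFun (g i) Y μ := by
        have h := hIindep.comp hφm hψm
        exact h.congr (ae_of_all _ fun ω => rfl) (ae_of_all _ fun ω => (hψeq ω).symm)
      have hmul := hi.integral_mul_eq_mul_integral (hgiint i).aestronglyMeasurable hYint.aestronglyMeasurable
      have h2 : ∫ ω, (g i * Y) ω ∂μ = (∫ ω, g i ω ∂μ) * ∫ ω, Y ω ∂μ := hmul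
      simpa [Pi.mul_apply, hgint_val i] using h2
    -- χ is independent of each X'_i, so those terms vanish
    have hB : ∀ i : Fin n, ∫ ω, χ ω * X' i ω j ∂μ = 0 := by
      intro i
      set S : Finset (Sum (Fin n) (Fin n)) := Finset.univ.image Sum.inl with hS
      have hST : Disjoint S {Sum.inr i} := by
        simp [hS, Finset.disjoint_left]
      have helim : ∀ k, Measurable (Sum.elim X X' k) := by
        rintro (k | k); exacts [hXm k, hX'm k]
      have h0 := hindep.indepFun_finset S {Sum.inr i} hST helim
      have hinlmem : ∀ k : Fin n, Sum.inl k ∈ S :=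
        fun k => Finset.mem_image_of_mem _ (Finset.mem_univ k)
      have hirmem : (Sum.inr i : Sum (Fin n) (Fin n)) ∈ ({Sum.inr i} : Finset _) :=
        Finset.mem_singleton_self _
      set α : ((k : S) → EuclideanSpace ℝ (Fin d)) → ℝ :=
        fun v => t.indicator (fun _ => (1:ℝ)) (c • ∑ k : Fin n, v ⟨Sum.inl k, hinlmem k⟩)
        with hα
      have hsum_m : Measurable fun v : ((k : S) → EuclideanSpace ℝ (Fin d)) =>
          c • ∑ k : Fin n, v ⟨Sum.inl k, hinlmem k⟩ :=
        Measurable.const_smul (Finset.measurable_sum Finset.univ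
          (fun k _ => measurable_pi_apply (⟨Sum.inl k, hinlmem k⟩ : S))) c
      have hαm : Measurable α := (measurable_const.indicator ht).comp hsum_m
      set β : ((k : ({Sum.inr i} : Finset (Sum (Fin n) (Fin n)))) → EuclideanSpace ℝ (Fin d)) → ℝ :=
        fun v => v ⟨Sum.inr i, hirmem⟩ j with hβ
      have hβm : Measurable β :=
        (EuclideanSpace.proj (𝕜 := ℝ) j).measurable.comp (measurable_pi_apply _)
      have h1 := h0.comp hαm hβm
      have h2 : IndepFun χ (fun ω => X' i ω j) μ := by
        refine h1.congr (ae_of_all _ fun ω => ?_) (ae_of_all _ fun ω => rfl)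
        show α (fun k : S => Sum.elim X X' k ω) = χ ω
        show t.indicator (fun _ => (1:ℝ)) (c • ∑ k : Fin n, X k ω)
          = t.indicator (fun _ => (1:ℝ)) (W ω)
        rw [hW ω]
      have h3 := h2.integral_mul_eq_mul_integral hχint.aestronglyMeasurable (hX'j i).aestronglyMeasurable
      have h4 : ∫ ω, (χ * fun ω => X' i ω j) ω ∂μ
          = (∫ ω, χ ω ∂μ) * ∫ ω, X' i ω j ∂μ := h3
      simpa [Pi.mul_apply, hX'jmean i] using h4
    -- sum identity for W components
    have hsum : ∀ ω, ∑ i, X i ω j = Real.sqrt n * W ω j := by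
      intro ω
      have h1 : W ω j = c * ∑ i, X i ω j := by
        calc W ω j = c * (∑ i, X i ω) j := by rw [hW ω]; simp
        _ = c * ∑ i, X i ω j := by rw [WithLp.ofLp_sum, Finset.sum_apply]
      rw [h1, ← mul_assoc, mul_comm (Real.sqrt n) c, hcs, one_mul]
    -- expansion of the randomly-indexed components
    have hexp : ∀ (Y : Fin n → Ω → EuclideanSpace ℝ (Fin d)),
        (fun ω => χ ω * Y (I ω) ω j) = fun ω => ∑ i, g i ω * (χ ω * Y i ω j) := by
      intro Y
      funext ω
      have h1 : ∑ i, g i ω * (χ ω * Y i ω j) = ∑ i, if I ω = i then χ ω * Y i ω j else 0 := by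
        refine Finset.sum_congr rfl fun i _ => ?_
        by_cases h : I ω = i <;> simp [hgdef, h]
      rw [h1, Finset.sum_ite_eq]; simp
    have hterm_int : ∀ (Y : Fin n → Ω → EuclideanSpace ℝ (Fin d)), (∀ i, Integrable (fun ω => Y i ω j) μ) →
        ∀ i : Fin n, Integrable (fun ω => g i ω * (χ ω * Y i ω j)) μ := by
      intro Y hY i
      exact hbdd _ _ (hgm i) (hgb i) (hbdd _ _ hχm hχb (hY i))
    have hψex : ∀ (i : Fin n),
        ∃ ψ : (Fin n → EuclideanSpace ℝ (Fin d)) × (Fin n → EuclideanSpace ℝ (Fin d)) → ℝ, Measurable ψ ∧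
          ∀ ω, χ ω * X' i ω j = ψ (J ω, J' ω) := by
      intro i
      refine ⟨fun p => t.indicator (fun _ => (1:ℝ)) (c • ∑ k, p.1 k) * p.2 i j,
        ((measurable_const.indicator ht).comp
          (((Finset.measurable_sum _ fun k _ =>
            (measurable_pi_apply k).comp measurable_fst)).const_smul c)).mul
          ((EuclideanSpace.proj (𝕜 := ℝ) j).measurable.comp
            ((measurable_pi_apply i).comp measurable_snd)), fun ω => ?_⟩
      show χ ω * X' i ω j
        = t.indicator (fun _ => (1:ℝ)) (c • ∑ k, X k ω) * X' i ω j
      rw [hχdef]; simp only []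
      rw [hW ω]
    have hψex' : ∀ (i : Fin n),
        ∃ ψ : (Fin n → EuclideanSpace ℝ (Fin d)) × (Fin n → EuclideanSpace ℝ (Fin d)) → ℝ, Measurable ψ ∧
          ∀ ω, χ ω * X i ω j = ψ (J ω, J' ω) := by
      intro i
      refine ⟨fun p => t.indicator (fun _ => (1:ℝ)) (c • ∑ k, p.1 k) * p.1 i j,
        ((measurable_const.indicator ht).comp
          (((Finset.measurable_sum _ fun k _ =>
            (measurable_pi_apply k).comp measurable_fst)).const_smul c)).mul
          ((EuclideanSpace.proj (𝕜 := ℝ) j).measurable.comp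
            ((measurable_pi_apply i).comp measurable_fst)), fun ω => ?_⟩
      show χ ω * X i ω j
        = t.indicator (fun _ => (1:ℝ)) (c • ∑ k, X k ω) * X i ω j
      rw [hχdef]; simp only []
      rw [hW ω]
    -- the X' term vanishes
    have e3 : ∫ ω, χ ω * X' (I ω) ω j ∂μ = 0 := by
      rw [hexp X', integral_finset_sum _ (fun i _ => hterm_int X' hX'j i)]
      refine Finset.sum_eq_zero fun i _ => ?_
      have h5 := hA i (fun ω => χ ω * X' i ω j) (hψex i) (hbdd _ _ hχm hχb (hX'j i))
      rw [hB i, mul_zero] at h5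
      exact h5
    -- the X term gives back W
    have e4 : ∫ ω, χ ω * X (I ω) ω j ∂μ
        = (n:ℝ)⁻¹ * (Real.sqrt n * ∫ ω, χ ω * W ω j ∂μ) := by
      rw [hexp X, integral_finset_sum _ (fun i _ => hterm_int X hXj i)]
      have h5 : ∀ i ∈ Finset.univ, ∫ ω, g i ω * (χ ω * X i ω j) ∂μ
          = (n:ℝ)⁻¹ * ∫ ω, χ ω * X i ω j ∂μ :=
        fun i _ => hA i (fun ω => χ ω * X i ω j) (hψex' i) (hbdd _ _ hχm hχb (hXj i))
      rw [Finset.sum_congr rfl h5, ← Finset.mul_sum,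
        ← integral_finset_sum _ (fun i _ => hbdd _ _ hχm hχb (hXj i))]
      congr 1
      rw [show (fun ω => ∑ i, χ ω * X i ω j) = fun ω => Real.sqrt n * (χ ω * W ω j) from
        funext fun ω => by rw [← Finset.mul_sum, hsum ω]; ring, integral_const_mul _ _]
    -- put everything together
    have hWj : Integrable (fun ω => W ω j) μ := by
      have := (EuclideanSpace.proj (𝕜 := ℝ) j).integrable_comp hWint
      simpa using this
    have e1 : (fun ω => χ ω * (c * (X' (I ω) ω j - X (I ω) ω j)))
        = fun ω => c * (χ ω * X' (I ω) ω j - χ ω * X (I ω) ω j) := by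
      funext ω; ring
    rw [e1, integral_const_mul _ _, integral_const_mul _ _,
      integral_sub (hbdd _ _ hχm hχb hX'Ij) (hbdd _ _ hχm hχb hXIj), e3, e4]
    have hfin : c * (0 - (n:ℝ)⁻¹ * (Real.sqrt n * ∫ ω, χ ω * W ω j ∂μ))
        = -((c * Real.sqrt n) * ((n:ℝ)⁻¹ * ∫ ω, χ ω * W ω j ∂μ)) := by ring
    rw [hfin, hcs, one_mul]
    ring
  · have hWm' : Measurable[MeasurableSpace.comap W inferInstance] W := fun s hs => ⟨s, hs, rfl⟩
    exact StronglyMeasurable.aestronglyMeasurable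
      ((hWm'.const_smul (-(n:ℝ)⁻¹)).stronglyMeasurable)
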